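/- For every integer k ≥ 3 there exist a finite group G of order n and positive integers a_1, ..., a_k with each a_i > 1 and n = a_1⋯a_k such that G has no k-fold factorization of the form (a_1, ..., a_k). -/

import Mathlib

open Pointwise

/-- A finite group `G` has a `k`-fold factorization of the form `(a 0, …, a (k-1))`:
there are subsets `A 0, …, A (k-1)` of `G` with `|A i| = a i`, `|G| = a 0 ⋯ a (k-1)`,
and the setwise product `A 0 ⋯ A (k-1)` equals `G`. -/
def HasFactorization (G : Type*) [Group G] {k : ℕ} (a : Fin k → ℕ) : Prop :=
  ∃ A : Fin k → Set G,
    (∀ i, Nat.card (A i) = a i) ∧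
    Nat.card G = ∏ i, a i ∧
    (List.ofFn A).prod = (Set.univ : Set G)



structure AffGrp (F : Type) [Field F] : Type where
  v : F
  s : Fˣ

namespace AffGrp

variable {F : Type} [Field F]

@[ext] lemma ext' {g h : AffGrp F} (h1 : g.v = h.v) (h2 : g.s = h.s) : g = h := by
  cases g; cases h; simp_all

instance : Mul (AffGrp F) := ⟨fun g h => ⟨g.v + (g.s : F) * h.v, g.s * h.s⟩⟩
instance : One (AffGrp F) := ⟨⟨0, 1⟩⟩
instance : Inv (AffGrp F) := ⟨fun g => ⟨-(((g.s⁻¹ : Fˣ) : F) * g.v), g.s⁻¹⟩⟩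

@[simp] lemma mul_v (g h : AffGrp F) : (g * h).v = g.v + (g.s : F) * h.v := rfl
@[simp] lemma mul_s (g h : AffGrp F) : (g * h).s = g.s * h.s := rfl
@[simp] lemma one_v : (1 : AffGrp F).v = 0 := rfl
@[simp] lemma one_s : (1 : AffGrp F).s = 1 := rfl
@[simp] lemma inv_v (g : AffGrp F) : (g⁻¹).v = -(((g.s⁻¹ : Fˣ) : F) * g.v) := rfl
@[simp] lemma inv_s (g : AffGrp F) : (g⁻¹).s = g.s⁻¹ := rfl

instance : Group (AffGrp F) where
  mul_assoc a b c := by apply ext' <;> simp [Units.val_mul, mul_assoc] <;> ring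
  one_mul a := by apply ext' <;> simp
  mul_one a := by apply ext' <;> simp
  inv_mul_cancel a := by apply ext' <;> simp

def prodEquiv : AffGrp F ≃ F × Fˣ where
  toFun g := (g.v, g.s)
  invFun p := ⟨p.1, p.2⟩
  left_inv _ := rfl
  right_inv _ := rfl

instance [Finite F] : Finite (AffGrp F) := Finite.of_equiv _ prodEquiv.symm

lemma card_eq [Finite F] : Nat.card (AffGrp F) = Nat.card F * (Nat.card F - 1) := by
  rw [Nat.card_congr (prodEquiv (F := F)), Nat.card_prod, Nat.card_units]

lemma pow_eq (g : AffGrp F) (n : ℕ) :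
    g ^ n = ⟨(∑ i ∈ Finset.range n, (g.s : F) ^ i) * g.v, g.s ^ n⟩ := by
  induction n with
  | zero => apply ext' <;> simp
  | succ n ih =>
    rw [pow_succ, ih]
    apply ext'
    · simp [Finset.sum_range_succ, Units.val_pow_eq_pow_val]
      ring
    · simp [pow_succ]

lemma sq_or_odd [Finite F] (hchar : ∀ a : F, a + a = 0)
    (heven : Even (Nat.card F)) (g : AffGrp F) :
    g * g = 1 ∨ Odd (orderOf g) := by
  by_cases hs : g.s = 1
  · left
    apply ext'
    · simp [hs, hchar]
    · simp [hs]
  · right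
    have hpow : g ^ (orderOf g.s) = 1 := by
      rw [pow_eq]
      have hs1 : (g.s : F) ≠ 1 := fun h => hs (Units.ext h)
      have hv : ((g.s : F)) ^ (orderOf g.s) = 1 := by
        rw [← Units.val_pow_eq_pow_val, pow_orderOf_eq_one, Units.val_one]
      rw [geom_sum_eq hs1, hv]
      apply ext' <;> simp [pow_orderOf_eq_one]
    have hdvd : orderOf g ∣ Nat.card Fˣ :=
      (orderOf_dvd_of_pow_eq_one hpow).trans (orderOf_dvd_natCard _)
    have hcardodd : Odd (Nat.card Fˣ) := by
      rw [Nat.card_units]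
      exact Nat.Even.sub_odd Nat.card_pos heven odd_one
    rcases hdvd with ⟨c, hc⟩
    rw [Nat.odd_iff] at hcardodd ⊢
    rcases Nat.even_or_odd (orderOf g) with he | ho
    · obtain ⟨t, ht⟩ := he
      have h2 : Nat.card Fˣ = 2 * (t * c) := by rw [hc, ht]; ring
      omega
    · exact Nat.odd_iff.mp ho

lemma conj_invol (hchar : ∀ a : F, a + a = 0) (g h : AffGrp F)
    (hg : g * g = 1) (hh : h * h = 1) (hg1 : g ≠ 1) (hh1 : h ≠ 1) :
    ∃ u : AffGrp F, g * u = u * h := by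
  have hs : ∀ t : AffGrp F, t * t = 1 → t.s = 1 := by
    intro t ht
    have hval : (t.s : F) * t.s = 1 := by
      have h1 : t.s * t.s = 1 := by have := congrArg AffGrp.s ht; simpa using this
      calc (t.s : F) * t.s = ((t.s * t.s : Fˣ) : F) := by rw [Units.val_mul]
        _ = 1 := by rw [h1, Units.val_one]
    have hx : ((t.s : F) + 1) * ((t.s : F) + 1) = 0 := by
      linear_combination hval + hchar (t.s : F) + hchar 1
    have hz : (t.s : F) + 1 = 0 := by rcases mul_eq_zero.mp hx with h' | h' <;> exact h'
    have hone : (t.s : F) = 1 := by linear_combination hz - hchar 1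
    exact Units.ext (by simpa using hone)
  have hgs := hs g hg
  have hhs := hs h hh
  have hgv : g.v ≠ 0 := fun h' => hg1 (ext' h' hgs)
  have hhv : h.v ≠ 0 := fun h' => hh1 (ext' h' hhs)
  refine ⟨⟨0, Units.mk0 (g.v / h.v) (div_ne_zero hgv hhv)⟩, ?_⟩
  apply ext'
  · simp [hgs, div_mul_cancel₀ _ hhv]
  · simp [hgs, hhs]

end AffGrp

variable {G : Type} [Group G] [Finite G]

/-- If `f` is a bijection with `f^[n] = id` for odd `n`, no set can satisfy `f '' D = Dᶜ`. -/
lemma split_contra {α : Type} [Nonempty α] (f : α → α) (hbij : Function.Bijective f)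
    {n : ℕ} (hodd : Odd n) (hpow : f^[n] = id) (D : Set α) (hD : f '' D = Dᶜ) : False := by
  have h2 : f '' (f '' D) = D := by
    rw [hD, Set.image_compl_eq hbij, hD, compl_compl]
  have key : ∀ j : ℕ, f^[2 * j] '' D = D := by
    intro j
    induction j with
    | zero => simp
    | succ j ih =>
      have : 2 * (j + 1) = 2 * j + 2 := by ring
      rw [this, Function.iterate_add, Set.image_comp]
      rw [show f^[2] = f ∘ f from rfl, Set.image_comp] at *
      rw [h2, ih]
  obtain ⟨j, hj⟩ := hodd
  have hiter : f^[2 * (j + 1)] '' D = D := key (j + 1)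
  have : f^[2 * (j + 1)] = f := by
    have : 2 * (j + 1) = n + 1 := by omega
    rw [this, Function.iterate_succ, hpow]
    simp
  rw [this, hD] at hiter
  obtain ⟨a⟩ := ‹Nonempty α›
  by_cases ha : a ∈ D
  · rw [← hiter] at ha; exact ha (hiter ▸ ha)
  · exact ha (hiter ▸ ha)

lemma ncard_mul_le' (S T : Set G) : (S * T).ncard ≤ S.ncard * T.ncard := by
  simpa [Nat.card_coe_set_eq] using Set.natCard_mul_le (s := S) (t := T)

/-- If four sets of size ≤ c cover a universe of size ≥ 4c, the first two are disjoint. -/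
lemma quad_disj {c : ℕ} (s t u v : Set G)
    (hcov : ∀ g : G, g ∈ s ∨ g ∈ t ∨ g ∈ u ∨ g ∈ v)
    (hN : 4 * c ≤ Nat.card G)
    (hs : s.ncard ≤ c) (ht : t.ncard ≤ c) (hu : u.ncard ≤ c) (hv : v.ncard ≤ c) :
    s ∩ t = ∅ := by
  have hsub : (Set.univ : Set G) ⊆ ((s ∪ t) ∪ u) ∪ v := by
    intro g _
    rcases hcov g with h | h | h | h
    · exact Or.inl (Or.inl (Or.inl h))
    · exact Or.inl (Or.inl (Or.inr h))
    · exact Or.inl (Or.inr h)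
    · exact Or.inr h
  have h1 : Nat.card G ≤ (((s ∪ t) ∪ u) ∪ v).ncard := by
    rw [← Set.ncard_univ]
    exact Set.ncard_le_ncard hsub
  have h2 : (((s ∪ t) ∪ u) ∪ v).ncard ≤ (s ∪ t).ncard + u.ncard + v.ncard :=
    le_trans (Set.ncard_union_le _ _)
      (Nat.add_le_add_right (Set.ncard_union_le _ _) _)
  have h3 : (s ∪ t).ncard + (s ∩ t).ncard = s.ncard + t.ncard :=
    Set.ncard_union_add_ncard_inter s t
  have h4 : (s ∩ t).ncard = 0 := by omega
  exact (Set.ncard_eq_zero (Set.toFinite _)).mp h4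

lemma mem_of_eq {S T : Set G} (h : S = T) {g : G} (hg : g ∈ S) : g ∈ T := h ▸ hg

/-- Core lemma: a group in which every element squares to 1 or has odd order, and in which
all involutions are conjugate, has no exact factorization `X * B * Y` with `|X| = |Y| = 2`. -/
lemma core_lemma
    (H1 : ∀ g : G, g * g = 1 ∨ Odd (orderOf g))
    (H2 : ∀ g h : G, g * g = 1 → h * h = 1 → g ≠ 1 → h ≠ 1 → ∃ u : G, g * u = u * h)
    (X B Y : Set G) (hX : X.ncard = 2) (hY : Y.ncard = 2)
    (hB : 4 * B.ncard ≤ Nat.card G)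
    (hcover : X * B * Y = Set.univ) : False := by
  obtain ⟨x₁, x₂, hx12, rfl⟩ := Set.ncard_eq_two.mp hX
  obtain ⟨y₁, y₂, hy12, rfl⟩ := Set.ncard_eq_two.mp hY
  set c := B.ncard with hc
  set x := x₂ * x₁⁻¹ with hxdef
  set y := y₁⁻¹ * y₂ with hydef
  have hx1 : x ≠ 1 := by
    intro h
    apply hx12
    have : x₂ * x₁⁻¹ * x₁ = 1 * x₁ := by rw [← hxdef, h]
    simpa [inv_mul_cancel_right] using this.symm
  have hy1 : y ≠ 1 := by
    intro h
    apply hy12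
    have := congrArg (y₁ * ·) h
    simpa [hydef, mul_inv_cancel_left] using this.symm
  -- Case 1 : x has odd order
  rcases H1 x with hx2 | hxodd
  swap
  · -- D := x₁ • (B * {y₁, y₂})
    set R : Set G := B * {y₁, y₂} with hR
    set D : Set G := (x₁ * ·) '' R with hD
    have hcov2 : (Set.univ : Set G) = D ∪ (x * ·) '' D := by
      rw [← hcover, Set.insert_eq, Set.union_mul, Set.union_mul]
      congr 1
      · rw [mul_assoc, Set.singleton_mul]
      · rw [mul_assoc, Set.singleton_mul, hD, Set.image_image]
        apply Set.image_congr'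
        intro b
        rw [hxdef, mul_assoc, inv_mul_cancel_left]
    have hcardR : R.ncard ≤ 2 * c := by
      calc R.ncard ≤ B.ncard * ({y₁, y₂} : Set G).ncard := ncard_mul_le' _ _
        _ ≤ 2 * c := by rw [hY, hc]; ring_nf; exact le_refl _
    have hcardD : D.ncard ≤ 2 * c := by
      rw [hD, Set.ncard_image_of_injective _ (mul_right_injective x₁)]
      exact hcardR
    -- complement
    have hsub : Dᶜ ⊆ (x * ·) '' D := by
      intro g hg
      have : g ∈ D ∪ (x * ·) '' D := by rw [← hcov2]; trivial
      rcases this with h | h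
      · exact absurd h hg
      · exact h
    have heq : Dᶜ = (x * ·) '' D := by
      apply Set.eq_of_subset_of_ncard_le hsub
      rw [Set.ncard_image_of_injective _ (mul_right_injective x)]
      have hcompl : D.ncard + Dᶜ.ncard = Nat.card G := Set.ncard_add_ncard_compl D
      omega
    exact split_contra (x * ·) (Equiv.mulLeft x).bijective
      hxodd (by rw [mul_left_iterate, pow_orderOf_eq_one]; funext g; simp) D heq.symm
  rcases H1 y with hy2 | hyodd
  swap
  · set R : Set G := {x₁, x₂} * B with hR
    set E : Set G := (· * y₁) '' R with hE
    have hcov2 : (Set.univ : Set G) = E ∪ (· * y) '' E := by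
      rw [← hcover, Set.insert_eq y₁ {y₂}, Set.mul_union]
      congr 1
      · rw [Set.mul_singleton]
      · rw [Set.mul_singleton, hE, Set.image_image]
        apply Set.image_congr'
        intro b
        rw [hydef, ← mul_assoc, mul_inv_cancel_right]
    have hcardE : E.ncard ≤ 2 * c := by
      rw [hE, Set.ncard_image_of_injective _ (mul_left_injective y₁)]
      calc R.ncard ≤ ({x₁, x₂} : Set G).ncard * B.ncard := ncard_mul_le' _ _
        _ ≤ 2 * c := by rw [hX, hc]
    have hsub : Eᶜ ⊆ (· * y) '' E := by
      intro g hg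
      have : g ∈ E ∪ (· * y) '' E := by rw [← hcov2]; trivial
      rcases this with h | h
      · exact absurd h hg
      · exact h
    have heq : Eᶜ = (· * y) '' E := by
      apply Set.eq_of_subset_of_ncard_le hsub
      rw [Set.ncard_image_of_injective _ (mul_left_injective y)]
      have hcompl : E.ncard + Eᶜ.ncard = Nat.card G := Set.ncard_add_ncard_compl E
      omega
    exact split_contra (· * y) (Equiv.mulRight y).bijective
      hyodd (by rw [mul_right_iterate, pow_orderOf_eq_one]; funext g; simp) E heq.symm
  -- Both x and y are involutions.
  set P11 : Set G := {x₁} * B * {y₁} with hP11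
  set P21 : Set G := {x₂} * B * {y₁} with hP21
  set P12 : Set G := {x₁} * B * {y₂} with hP12
  set P22 : Set G := {x₂} * B * {y₂} with hP22
  have hxx : x * x₁ = x₂ := by rw [hxdef, inv_mul_cancel_right]
  have hyy : y₁ * y = y₂ := by rw [hydef, mul_inv_cancel_left]
  have hrel1 : (x * ·) '' P11 = P21 := by
    rw [hP11, hP21, ← Set.singleton_mul, ← mul_assoc, ← mul_assoc,
      Set.singleton_mul_singleton, hxx]
  have hrel2 : (x * ·) '' P12 = P22 := by
    rw [hP12, hP22, ← Set.singleton_mul, ← mul_assoc, ← mul_assoc,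
      Set.singleton_mul_singleton, hxx]
  have hrel3 : (· * y) '' P11 = P12 := by
    rw [hP11, hP12, ← Set.mul_singleton, mul_assoc, mul_assoc,
      Set.singleton_mul_singleton, hyy, ← mul_assoc]
  have hrel4 : (· * y) '' P21 = P22 := by
    rw [hP21, hP22, ← Set.mul_singleton, mul_assoc, mul_assoc,
      Set.singleton_mul_singleton, hyy, ← mul_assoc]
  have hc11 : P11.ncard = c := by
    rw [hP11, Set.mul_singleton, Set.singleton_mul,
      Set.ncard_image_of_injective _ (mul_left_injective y₁),
      Set.ncard_image_of_injective _ (mul_right_injective x₁), hc]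
  have hc21 : P21.ncard = c := by
    rw [hP21, Set.mul_singleton, Set.singleton_mul,
      Set.ncard_image_of_injective _ (mul_left_injective y₁),
      Set.ncard_image_of_injective _ (mul_right_injective x₂), hc]
  have hc12 : P12.ncard = c := by
    rw [hP12, Set.mul_singleton, Set.singleton_mul,
      Set.ncard_image_of_injective _ (mul_left_injective y₂),
      Set.ncard_image_of_injective _ (mul_right_injective x₁), hc]
  have hc22 : P22.ncard = c := by
    rw [hP22, Set.mul_singleton, Set.singleton_mul,
      Set.ncard_image_of_injective _ (mul_left_injective y₂),
      Set.ncard_image_of_injective _ (mul_right_injective x₂), hc]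
  have hcov4 : ∀ g : G, g ∈ P11 ∨ g ∈ P21 ∨ g ∈ P12 ∨ g ∈ P22 := by
    intro g
    have hg : g ∈ ({x₁, x₂} : Set G) * B * {y₁, y₂} := by rw [hcover]; trivial
    obtain ⟨w, hw, yy, hyy', rfl⟩ := Set.mem_mul.mp hg
    obtain ⟨xx, hxx', b, hb, rfl⟩ := Set.mem_mul.mp hw
    have hbmem : ∀ (xi : G), xi ∈ ({x₁, x₂} : Set G) → ∀ (yj : G), yj ∈ ({y₁, y₂} : Set G) →
        (xi ∈ ({x₁} : Set G) ∨ xi ∈ ({x₂} : Set G)) ∧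
        (yj ∈ ({y₁} : Set G) ∨ yj ∈ ({y₂} : Set G)) := by
      intro xi hxi yj hyj
      constructor
      · rcases hxi with h | h
        · exact Or.inl h
        · exact Or.inr h
      · rcases hyj with h | h
        · exact Or.inl h
        · exact Or.inr h
    obtain ⟨hxi, hyj⟩ := hbmem xx hxx' yy hyy'
    rcases hxi with h1 | h1 <;> rcases hyj with h2 | h2
    · exact Or.inl (Set.mul_mem_mul (Set.mul_mem_mul h1 hb) h2)
    · exact Or.inr (Or.inr (Or.inl (Set.mul_mem_mul (Set.mul_mem_mul h1 hb) h2)))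
    · exact Or.inr (Or.inl (Set.mul_mem_mul (Set.mul_mem_mul h1 hb) h2))
    · exact Or.inr (Or.inr (Or.inr (Set.mul_mem_mul (Set.mul_mem_mul h1 hb) h2)))
  have hd1 : P11 ∩ P22 = ∅ := by
    apply quad_disj P11 P22 P21 P12 _ hB (le_of_eq hc11) (le_of_eq hc22)
      (le_of_eq hc21) (le_of_eq hc12)
    intro g
    rcases hcov4 g with h | h | h | h
    · exact Or.inl h
    · exact Or.inr (Or.inr (Or.inl h))
    · exact Or.inr (Or.inr (Or.inr h))
    · exact Or.inr (Or.inl h)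
  have hd2 : P21 ∩ P12 = ∅ := by
    apply quad_disj P21 P12 P11 P22 _ hB (le_of_eq hc21) (le_of_eq hc12)
      (le_of_eq hc11) (le_of_eq hc22)
    intro g
    rcases hcov4 g with h | h | h | h
    · exact Or.inr (Or.inr (Or.inl h))
    · exact Or.inl h
    · exact Or.inr (Or.inl h)
    · exact Or.inr (Or.inr (Or.inr h))
  -- conjugating element
  obtain ⟨u, hu⟩ := H2 x y hx2 hy2 hx1 hy1
  have himg : ∀ (S : Set G) (f : G → G) (g : G), g ∈ S → f g ∈ f '' S :=
    fun S f g hg => Set.mem_image_of_mem f hg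
  have hxu2 : ∀ g : G, x * (x * g) = g := by
    intro g; rw [← mul_assoc, hx2, one_mul]
  have hyu2 : ∀ g : G, (g * y) * y = g := by
    intro g; rw [mul_assoc, hy2, mul_one]
  rcases hcov4 u with h | h | h | h
  · -- u ∈ P11 : x*u ∈ P21, u*y ∈ P12, equal
    have m1 : x * u ∈ P21 := hrel1 ▸ himg P11 (x * ·) u h
    have m2 : x * u ∈ P12 := by rw [hu]; exact hrel3 ▸ himg P11 (· * y) u h
    have : x * u ∈ P21 ∩ P12 := ⟨m1, m2⟩
    rw [hd2] at this; exact this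
  · -- u ∈ P21 : u = x * p with p ∈ P11
    obtain ⟨p, hp, rfl⟩ := (hrel1 ▸ h : u ∈ (x * ·) '' P11)
    have m1 : x * (x * p) ∈ P11 := by rw [hxu2]; exact hp
    have m2 : x * (x * p) ∈ P22 := by
      rw [hu]
      exact hrel4 ▸ himg P21 (· * y) (x * p) h
    have : x * (x * p) ∈ P11 ∩ P22 := ⟨m1, m2⟩
    rw [hd1] at this; exact this
  · -- u ∈ P12 : u = p * y with p ∈ P11
    obtain ⟨p, hp, rfl⟩ := (hrel3 ▸ h : u ∈ (· * y) '' P11)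
    have m2 : (p * y) * y ∈ P11 := by rw [hyu2]; exact hp
    have m1 : (p * y) * y ∈ P22 := by
      rw [← hu]
      exact hrel2 ▸ himg P12 (x * ·) (p * y) h
    have : (p * y) * y ∈ P11 ∩ P22 := ⟨m2, m1⟩
    rw [hd1] at this; exact this
  · -- u ∈ P22 : u = x * (p * y), x*u ∈ P12, u*y ∈ P21
    obtain ⟨q, hq, rfl⟩ := (hrel2 ▸ h : u ∈ (x * ·) '' P12)
    have m1 : x * (x * q) ∈ P12 := by rw [hxu2]; exact hq
    have m2 : x * (x * q) ∈ P21 := by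
      rw [hu]
      obtain ⟨p, hp, rfl⟩ := (hrel3 ▸ hq : q ∈ (· * y) '' P11)
      rw [mul_assoc, hyu2]
      exact hrel1 ▸ himg P11 (x * ·) p hp
    have : x * (x * q) ∈ P21 ∩ P12 := ⟨m2, m1⟩
    rw [hd2] at this; exact this

variable {G : Type} [Group G] [Finite G]

lemma ncard_mul_le2 (S T : Set G) : (S * T).ncard ≤ S.ncard * T.ncard := by
  simpa [Nat.card_coe_set_eq] using Set.natCard_mul_le (s := S) (t := T)

lemma ncard_list_prod_le (L : List (Set G)) : L.prod.ncard ≤ (L.map Set.ncard).prod := by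
  induction L with
  | nil => simp [List.prod_nil, show (1 : Set G) = {1} from rfl]
  | cons S L ih =>
    rw [List.prod_cons, List.map_cons, List.prod_cons]
    exact le_trans (ncard_mul_le2 S L.prod) (Nat.mul_le_mul_left _ ih)

set_option maxHeartbeats 1000000 in
/-- For every integer `k ≥ 3` there exist a finite group `G` of order `n` and a
factorization `n = a 1 ⋯ a k` with all `a i > 1` such that `G` has no `k`-fold
factorization of the form `(a 1, …, a k)`. -/
theorem exists_group_without_k_factorization (k : ℕ) (hk : 3 ≤ k) :
    ∃ (G : Type) (inst : Group G) (_ : Finite G) (a : Fin k → ℕ),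
      (∀ i, 1 < a i) ∧ Nat.card G = ∏ i, a i ∧ ¬ @HasFactorization G inst k a := by
  obtain ⟨m, rfl⟩ : ∃ m, k = m + 3 := ⟨k - 3, by omega⟩
  set q : ℕ := 2 ^ (m + 2) with hq
  have hq4 : 4 ≤ q := by
    rw [hq]
    calc (4:ℕ) = 2 ^ 2 := by norm_num
      _ ≤ 2 ^ (m + 2) := Nat.pow_le_pow_right (by norm_num) (by omega)
  let F : Type := GaloisField 2 (m + 2)
  let G : Type := AffGrp F
  have hcardF : Nat.card F = q := GaloisField.card 2 (m + 2) (by omega)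
  have hcardG : Nat.card G = q * (q - 1) := by
    rw [show Nat.card G = Nat.card F * (Nat.card F - 1) from AffGrp.card_eq, hcardF]
  set a : Fin (m + 3) → ℕ := fun i => if (i : ℕ) = 1 then q - 1 else 2 with ha
  have ha0 : a 0 = 2 := by simp [ha]
  have ha1 : ∀ i : Fin (m + 3), (i : ℕ) = 1 → a i = q - 1 := by
    intro i hi; simp [ha, hi]
  have haelse : ∀ i : Fin (m + 3), (i : ℕ) ≠ 1 → a i = 2 := by
    intro i hi; simp [ha, hi]
  -- product of the middle part
  have hmid : (∏ i : Fin (m + 1), a ((Fin.castSucc i).succ)) = (q - 1) * 2 ^ m := by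
    rw [Fin.prod_univ_succ]
    have e1 : a ((Fin.castSucc (0 : Fin (m + 1))).succ) = q - 1 := ha1 _ (by simp)
    have h2 : ∀ i : Fin m, a ((Fin.castSucc i.succ).succ) = 2 :=
      fun i => haelse _ (by simp [Fin.val_succ])
    rw [e1, Finset.prod_congr rfl (fun i _ => h2 i)]
    simp
  have hprodall : (∏ i, a i) = q * (q - 1) := by
    rw [Fin.prod_univ_succ, Fin.prod_univ_succ]
    have e0 : a 0 = 2 := ha0
    have e1 : a ((0 : Fin (m + 2)).succ) = q - 1 := by apply ha1; simp
    have e2 : ∀ i : Fin (m + 1), a (i.succ.succ) = 2 := by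
      intro i; apply haelse; simp [Fin.val_succ]
    rw [e0, e1]
    calc 2 * ((q - 1) * ∏ i : Fin (m + 1), a (i.succ.succ))
        = 2 * ((q - 1) * ∏ _i : Fin (m + 1), 2) := by
          rw [Finset.prod_congr rfl (fun i _ => e2 i)]
      _ = 2 * ((q - 1) * 2 ^ (m + 1)) := by simp
      _ = q * (q - 1) := by rw [hq]; ring
  refine ⟨G, inferInstance, inferInstance, a, ?_, ?_, ?_⟩
  · intro i
    by_cases hi : (i : ℕ) = 1
    · rw [ha1 i hi]; omega
    · rw [haelse i hi]; omega
  · rw [hcardG, hprodall]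
  · rintro ⟨A, hA, hcard, hprod⟩
    -- decompose the product
    set X : Set G := A 0 with hX
    set Y : Set G := A (Fin.last (m + 2)) with hYdef
    set Bmid : Set G := (List.ofFn (fun i : Fin (m + 1) => A ((Fin.castSucc i).succ))).prod
      with hBmid
    have hdecomp : (List.ofFn A).prod = X * Bmid * A ((Fin.last (m + 1)).succ) := by
      rw [List.ofFn_succ, List.prod_cons, List.ofFn_succ', List.prod_concat, ← mul_assoc]
    have hlast : (Fin.last (m + 1)).succ = Fin.last (m + 2) := by
      ext; simp [Fin.val_succ]
    rw [hlast] at hdecomp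
    have hcover : X * Bmid * Y = Set.univ := by rw [← hdecomp, hprod]
    -- cardinalities
    have hncardA : ∀ i, (A i).ncard = a i := by
      intro i; rw [← Nat.card_coe_set_eq, hA]
    have hXc : X.ncard = 2 := by rw [hX, hncardA]; exact ha0
    have hYc : Y.ncard = 2 := by
      rw [hYdef, hncardA]
      apply haelse
      rw [Fin.val_last]
      omega
    have hBc : Bmid.ncard ≤ (q - 1) * 2 ^ m := by
      rw [hBmid]
      refine le_trans (ncard_list_prod_le _) ?_
      rw [List.map_ofFn, List.prod_ofFn]
      have : ∀ i : Fin (m + 1), (Set.ncard ∘ fun i => A ((Fin.castSucc i).succ)) i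
          = a ((Fin.castSucc i).succ) := fun i => hncardA _
      rw [Finset.prod_congr rfl (fun i _ => this i)]
      rw [hmid]
    have hB4 : 4 * Bmid.ncard ≤ Nat.card G := by
      have h4 : 4 * ((q - 1) * 2 ^ m) = q * (q - 1) := by rw [hq]; ring
      rw [hcardG]
      omega
    -- group-theoretic hypotheses
    have hchar : ∀ v : F, v + v = 0 := fun v => CharTwo.add_self_eq_zero v
    have heven : Even (Nat.card F) := by
      rw [hcardF, hq]
      exact ⟨2 ^ (m + 1), by ring⟩
    exact core_lemma (AffGrp.sq_or_odd hchar heven) (AffGrp.conj_invol hchar)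
      X Bmid Y hXc hYc hB4 hcover
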